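/- Let δ ∈ (0, 4.864) and r_max := 4.864 − δ, and assume the step ratios satisfy 0 < r_k < r_max for 2 ≤ k ≤ N+1. Define the discrete modified energy 𝓔_h[φ^n, R^n] := (ε²/2)‖∇_hφ^n‖² + R^n + (r_{n+1}√r_max/(2(1+r_{n+1})))·‖φ^n − φ^{n−1}‖²/τ_n for n ≥ 1, and 𝓔_h[φ^0, R^0] := (ε²/2)‖∇_hφ^0‖² + R^0. Then for any κ ≥ 0 and any functions f, F, V : ℝ → ℝ, the solution of the BDF2-sESAV-I scheme satisfies 𝓔_h[φ^n, R^n] ≤ 𝓔_h[φ^{n−1}, R^{n−1}] for all 1 ≤ n ≤ N. -/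

import Mathlib

/-- Discrete Laplace operator on periodic grid functions. -/
noncomputable def lapH (M : ℕ) (h : ℝ) (v : ZMod M × ZMod M → ℝ) :
    ZMod M × ZMod M → ℝ :=
  fun p => (v (p.1 + 1, p.2) + v (p.1 - 1, p.2) + v (p.1, p.2 + 1) + v (p.1, p.2 - 1)
    - 4 * v p) / h ^ 2

/-- Discrete inner product on periodic grid functions. -/
noncomputable def ipH (M : ℕ) [NeZero M] (h : ℝ)
    (v w : ZMod M × ZMod M → ℝ) : ℝ :=
  h ^ 2 * ∑ p : ZMod M × ZMod M, v p * w p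

/-- Discrete maximum norm of a periodic grid function. -/
noncomputable def maxNorm (M : ℕ) [NeZero M] (v : ZMod M × ZMod M → ℝ) : ℝ :=
  Finset.univ.sup' ⟨(0, 0), Finset.mem_univ _⟩ fun p => |v p|

/-- E_{1h}[v] = h² Σ F(v(i,j)). -/
noncomputable def E1h (M : ℕ) [NeZero M] (h : ℝ) (F : ℝ → ℝ)
    (v : ZMod M × ZMod M → ℝ) : ℝ :=
  h ^ 2 * ∑ p : ZMod M × ZMod M, F (v p)

/-- g_h(v, w) = exp(w)/exp(E_{1h}[v]). -/
noncomputable def gh (M : ℕ) [NeZero M] (h : ℝ) (F : ℝ → ℝ)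
    (v : ZMod M × ZMod M → ℝ) (w : ℝ) : ℝ :=
  Real.exp w / Real.exp (E1h M h F v)

/-- Adjacent step ratio: r_k = τ_k/τ_{k−1} for k ≥ 2, and r_1 = 0. -/
noncomputable def ratio (τ : ℕ → ℝ) (k : ℕ) : ℝ :=
  if 2 ≤ k then τ k / τ (k - 1) else 0

/-- Variable-step BDF2 convolution kernels b_j^{(n)}. -/
noncomputable def bker (τ : ℕ → ℝ) (n j : ℕ) : ℝ :=
  if n = 1 then (if j = 0 then 1 / τ 1 else 0)
  else if j = 0 then (1 + 2 * ratio τ n) / (τ n * (1 + ratio τ n))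
  else if j = 1 then -(ratio τ n) ^ 2 / (τ n * (1 + ratio τ n))
  else 0

/-- Variable-step BDF2 operator D₂w^n = Σ_{k=1}^n b_{n−k}^{(n)}(w^k − w^{k−1}). -/
noncomputable def D2 (τ : ℕ → ℝ) (w : ℕ → ℝ) (n : ℕ) : ℝ :=
  ∑ k ∈ Finset.Icc 1 n, bker τ n (n - k) * (w k - w (k - 1))

/-- Recombined kernels d_k^{(n)}: d_0^{(n)} = b_0^{(n)},
d_k^{(n)} = η^{k−1}(b_0^{(n)}η + b_1^{(n)}) for k ≥ 1 (so d_1^{(1)} = η b_0^{(1)}). -/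
noncomputable def dker (τ : ℕ → ℝ) (η : ℝ) (n k : ℕ) : ℝ :=
  if k = 0 then bker τ n 0
  else η ^ (k - 1) * (bker τ n 0 * η + bker τ n 1)

/-- The BDF2-sESAV-I scheme: predictor equation (i), BDF2 equation (ii) and
auxiliary-variable equation (iii), for 1 ≤ n ≤ N, with R^0 = E_{1h}[φ^0]. -/
structure BDF2sESAVI (M : ℕ) [NeZero M] (h ε κ : ℝ) (f F V : ℝ → ℝ)
    (N : ℕ) (τ : ℕ → ℝ) (φ φhat : ℕ → ZMod M × ZMod M → ℝ) (R : ℕ → ℝ) : Prop where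
  init : R 0 = E1h M h F (φ 0)
  pred : ∀ n, 1 ≤ n → n ≤ N → ∀ p,
    (φhat n p - φ (n - 1) p) / τ n =
      ε ^ 2 * lapH M h (φhat n) p + f (φ (n - 1) p)
        - κ * (φhat n p - φ (n - 1) p)
  step : ∀ n, 1 ≤ n → n ≤ N → ∀ p,
    D2 τ (fun k => φ k p) n =
      ε ^ 2 * lapH M h (φ n) p
        + V (gh M h F (φhat n) (R (n - 1))) * f (φhat n p)
        - κ * (φ n p - V (gh M h F (φhat n) (R (n - 1))) * φhat n p)
  aux : ∀ n, 1 ≤ n → n ≤ N →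
    (R n - R (n - 1)) / τ n =
      - ipH M h
          (fun p => V (gh M h F (φhat n) (R (n - 1))) * f (φhat n p)
            - κ * (φ n p - V (gh M h F (φhat n) (R (n - 1))) * φhat n p))
          (fun p => (φ n p - φ (n - 1) p) / τ n)

/-- Squared discrete L² norm of the discrete gradient ∇_h v (both components summed). -/
noncomputable def gradNormSq (M : ℕ) [NeZero M] (h : ℝ)
    (v : ZMod M × ZMod M → ℝ) : ℝ :=
  h ^ 2 * ∑ p : ZMod M × ZMod M,
    (((v (p.1 + 1, p.2) - v p) / h) ^ 2 + ((v (p.1, p.2 + 1) - v p) / h) ^ 2)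

/-- Squared discrete L² norm of a periodic grid function. -/
noncomputable def normSq (M : ℕ) [NeZero M] (h : ℝ)
    (v : ZMod M × ZMod M → ℝ) : ℝ :=
  h ^ 2 * ∑ p : ZMod M × ZMod M, (v p) ^ 2

/-- The discrete modified energy 𝓔_h[φ^n, R^n]. -/
noncomputable def modEnergy (M : ℕ) [NeZero M] (h ε rmax : ℝ) (τ : ℕ → ℝ)
    (φ : ℕ → ZMod M × ZMod M → ℝ) (R : ℕ → ℝ) (n : ℕ) : ℝ :=
  ε ^ 2 / 2 * gradNormSq M h (φ n) + R n +
    if n = 0 then 0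
    else ratio τ (n + 1) * Real.sqrt rmax / (2 * (1 + ratio τ (n + 1)))
      * normSq M h (fun p => φ n p - φ (n - 1) p) / τ n

/- ######## auxiliary lemmas ######## -/

section helpers
variable {M : ℕ} [NeZero M]

lemma sum_shift_x (v : ZMod M × ZMod M → ℝ) :
    (∑ p : ZMod M × ZMod M, v (p.1 + 1, p.2)) = ∑ p : ZMod M × ZMod M, v p :=
  Fintype.sum_equiv (Equiv.prodCongr (Equiv.addRight (1 : ZMod M)) (Equiv.refl _)) _ _
    (fun _ => rfl)

lemma sum_shift_y (v : ZMod M × ZMod M → ℝ) :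
    (∑ p : ZMod M × ZMod M, v (p.1, p.2 + 1)) = ∑ p : ZMod M × ZMod M, v p :=
  Fintype.sum_equiv (Equiv.prodCongr (Equiv.refl _) (Equiv.addRight (1 : ZMod M))) _ _
    (fun _ => rfl)

noncomputable def gIP (M : ℕ) [NeZero M] (v w : ZMod M × ZMod M → ℝ) : ℝ :=
  ∑ p : ZMod M × ZMod M, ((v (p.1 + 1, p.2) - v p) * (w (p.1 + 1, p.2) - w p)
    + (v (p.1, p.2 + 1) - v p) * (w (p.1, p.2 + 1) - w p))

lemma sbp (h : ℝ) (hh : h ≠ 0) (v w : ZMod M × ZMod M → ℝ) :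
    ipH M h (lapH M h v) w = - gIP M v w := by
  have l1 : ipH M h (lapH M h v) w
      = ((((∑ p : ZMod M × ZMod M, v (p.1+1,p.2) * w p)
        + ∑ p : ZMod M × ZMod M, v (p.1-1,p.2) * w p)
        + ∑ p : ZMod M × ZMod M, v (p.1,p.2+1) * w p)
        + ∑ p : ZMod M × ZMod M, v (p.1,p.2-1) * w p)
        - ∑ p : ZMod M × ZMod M, 4 * (v p * w p) := by
    unfold ipH lapH
    rw [Finset.mul_sum, ← Finset.sum_add_distrib, ← Finset.sum_add_distrib,
      ← Finset.sum_add_distrib, ← Finset.sum_sub_distrib]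
    refine Finset.sum_congr rfl fun p _ => ?_
    field_simp
  have l2 : gIP M v w
      = (∑ p : ZMod M × ZMod M, v (p.1+1,p.2) * w (p.1+1,p.2))
        - (∑ p : ZMod M × ZMod M, v (p.1+1,p.2) * w p)
        - (∑ p : ZMod M × ZMod M, v p * w (p.1+1,p.2))
        + ((∑ p : ZMod M × ZMod M, v (p.1,p.2+1) * w (p.1,p.2+1))
          - (∑ p : ZMod M × ZMod M, v (p.1,p.2+1) * w p))
        - (∑ p : ZMod M × ZMod M, v p * w (p.1,p.2+1))
        + (∑ p : ZMod M × ZMod M, 2 * (v p * w p)) := by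
    unfold gIP
    rw [← Finset.sum_sub_distrib, ← Finset.sum_sub_distrib, ← Finset.sum_sub_distrib,
      ← Finset.sum_add_distrib, ← Finset.sum_sub_distrib, ← Finset.sum_add_distrib]
    refine Finset.sum_congr rfl fun p _ => ?_
    ring
  have f1 := sum_shift_x (M := M) (fun q => v (q.1 - 1, q.2) * w q)
  have f2 := sum_shift_y (M := M) (fun q => v (q.1, q.2 - 1) * w q)
  have f3 := sum_shift_x (M := M) (fun q => v q * w q)
  have f4 := sum_shift_y (M := M) (fun q => v q * w q)
  simp only [add_sub_cancel_right] at f1 f2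
  have f5 : (∑ p : ZMod M × ZMod M, 4 * (v p * w p))
      = 4 * ∑ p : ZMod M × ZMod M, v p * w p := by
    rw [Finset.mul_sum]
  have f6 : (∑ p : ZMod M × ZMod M, 2 * (v p * w p))
      = 2 * ∑ p : ZMod M × ZMod M, v p * w p := by
    rw [Finset.mul_sum]
  rw [l1, l2, f1, f2, f3, f4, f5, f6]
  ring

lemma gIP_polar (v w : ZMod M × ZMod M → ℝ) :
    2 * gIP M v (fun p => v p - w p)
      = gIP M v v - gIP M w w
        + gIP M (fun p => v p - w p) (fun p => v p - w p) := by
  unfold gIP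
  rw [Finset.mul_sum, ← Finset.sum_sub_distrib, ← Finset.sum_add_distrib]
  exact Finset.sum_congr rfl fun p _ => by ring

lemma gIP_self_nonneg (v : ZMod M × ZMod M → ℝ) : 0 ≤ gIP M v v :=
  Finset.sum_nonneg fun _ _ => add_nonneg (mul_self_nonneg _) (mul_self_nonneg _)

lemma gradNormSq_eq (h : ℝ) (hh : h ≠ 0) (v : ZMod M × ZMod M → ℝ) :
    gradNormSq M h v = gIP M v v := by
  unfold gradNormSq gIP
  rw [Finset.mul_sum]
  refine Finset.sum_congr rfl fun p _ => ?_
  field_simp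

lemma normSq_eq (h : ℝ) (v : ZMod M × ZMod M → ℝ) :
    normSq M h v = h ^ 2 * ∑ p : ZMod M × ZMod M, v p * v p := by
  unfold normSq
  rw [Finset.sum_congr rfl fun (p : ZMod M × ZMod M) _ => sq (v p)]

lemma normSq_nonneg (h : ℝ) (v : ZMod M × ZMod M → ℝ) : 0 ≤ normSq M h v := by
  unfold normSq; positivity

end helpers

lemma D2_one (τ : ℕ → ℝ) (w : ℕ → ℝ) : D2 τ w 1 = 1 / τ 1 * (w 1 - w 0) := by
  unfold D2
  rw [Finset.Icc_self, Finset.sum_singleton]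
  norm_num [bker]

lemma D2_ge2 (τ : ℕ → ℝ) (w : ℕ → ℝ) (n : ℕ) (hn : 2 ≤ n) :
    D2 τ w n = bker τ n 0 * (w n - w (n - 1)) + bker τ n 1 * (w (n - 1) - w (n - 2)) := by
  unfold D2
  have hsub : ({n - 1, n} : Finset ℕ) ⊆ Finset.Icc 1 n := by
    intro k hk
    simp only [Finset.mem_insert, Finset.mem_singleton] at hk
    rcases hk with h | h <;> subst h <;> simp only [Finset.mem_Icc] <;> omega
  rw [← Finset.sum_subset hsub ?_]
  · rw [Finset.sum_pair (by omega : n - 1 ≠ n)]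
    rw [(by omega : n - (n - 1) = 1), Nat.sub_self, (by omega : n - 1 - 1 = n - 2)]
    ring
  · intro k hk hk2
    simp only [Finset.mem_Icc] at hk
    simp only [Finset.mem_insert, Finset.mem_singleton, not_or] at hk2
    have h1 : ¬ (n - k = 0) := by omega
    have h2 : ¬ (n - k = 1) := by omega
    simp [bker, h1, h2, (by omega : ¬ n = 1)]

lemma sqrt_key (s : ℝ) (hs : 0 < s) (hc : s ^ 2 ≤ 4.864) : s ^ 3 ≤ 1 + 2 * s ^ 2 := by
  have hsle : s ≤ 2.2055 := by nlinarith
  rcases le_or_gt s 2 with h2 | h2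
  · nlinarith [mul_nonneg (by linarith : (0:ℝ) ≤ 2 - s) (sq_nonneg s)]
  · nlinarith [mul_nonneg (by linarith : (0:ℝ) ≤ 4.864 - s ^ 2) (by linarith : (0:ℝ) ≤ s - 2)]

lemma coeff_one (s r' : ℝ) (hs : 0 < s) (hr' : 0 < r') (hr's : r' ≤ s ^ 2)
    (hk : s ^ 3 ≤ 1 + 2 * s ^ 2) : r' * s / (2 * (1 + r')) ≤ 1 := by
  rw [div_le_one (by linarith)]
  rcases le_or_gt s 2 with h2 | h2
  · nlinarith
  · nlinarith [mul_nonneg (by linarith : (0:ℝ) ≤ s ^ 2 - r') (by linarith : (0:ℝ) ≤ s - 2)]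

lemma poly_key (s r r' : ℝ) (hs : 0 < s) (hr : 0 < r) (hrs : r ≤ s ^ 2)
    (hr' : 0 < r') (hr's : r' ≤ s ^ 2) (hk : s ^ 3 ≤ 1 + 2 * s ^ 2) :
    r' * s / (2 * (1 + r')) ≤ (1 + 2 * r) / (1 + r) - r ^ 2 / (2 * s * (1 + r)) := by
  have h1r : (0:ℝ) < 1 + r := by linarith
  have h1r' : (0:ℝ) < 1 + r' := by linarith
  have hQ0 : 0 ≤ 2 * s + 2 * s * r' - s ^ 2 * r' := by
    rcases le_or_gt s 2 with h2 | h2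
    · nlinarith
    · nlinarith [mul_nonneg (mul_nonneg hs.le (by linarith : (0:ℝ) ≤ s - 2))
        (by linarith : (0:ℝ) ≤ s ^ 2 - r')]
  have hQ : 0 ≤ 2 * s * (1 + 2 * r) * (1 + r') - r ^ 2 * (1 + r') - r' * s ^ 2 * (1 + r) := by
    nlinarith [mul_nonneg (mul_nonneg (by linarith : (0:ℝ) ≤ s ^ 2 - r) (sq_nonneg s)) hQ0,
      mul_nonneg (mul_nonneg hr.le (by linarith : (0:ℝ) ≤ s ^ 2 - r'))
        (by nlinarith [sq_nonneg s] : (0:ℝ) ≤ s * (2 + 4 * s ^ 2 - s ^ 3)),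
      mul_nonneg (mul_nonneg hr.le hr'.le)
        (mul_nonneg (mul_nonneg (by linarith : (0:ℝ) ≤ 2 * s) (by positivity : (0:ℝ) ≤ 1 + s ^ 2))
          (by linarith : (0:ℝ) ≤ 1 + 2 * s ^ 2 - s ^ 3)),
      mul_nonneg (mul_nonneg (mul_nonneg (pow_nonneg hs.le 4) (by linarith : (0:ℝ) ≤ 1 + r')) hr.le)
        (by linarith : (0:ℝ) ≤ s ^ 2 - r),
      pow_pos hs 4]
  have e1 : (1 + 2 * r) / (1 + r) - r ^ 2 / (2 * s * (1 + r)) - r' * s / (2 * (1 + r'))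
      = (2 * s * (1 + 2 * r) * (1 + r') - r ^ 2 * (1 + r') - r' * s ^ 2 * (1 + r))
        / (2 * s * (1 + r) * (1 + r')) := by
    field_simp
  have e2 : 0 ≤ (2 * s * (1 + 2 * r) * (1 + r') - r ^ 2 * (1 + r') - r' * s ^ 2 * (1 + r))
        / (2 * s * (1 + r) * (1 + r')) := div_nonneg hQ (by positivity)
  linarith [e1 ▸ e2]


set_option maxHeartbeats 1600000 in
/-- Theorem 3.2 (discrete energy dissipation law of the BDF2-sESAV-I scheme):
with r_max = 4.864 − δ and step ratios 0 < r_k < r_max for 2 ≤ k ≤ N+1, for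
any κ ≥ 0 and any f, F, V the scheme satisfies
𝓔_h[φ^n, R^n] ≤ 𝓔_h[φ^{n−1}, R^{n−1}] for 1 ≤ n ≤ N. -/
theorem stmt1 (M : ℕ) [NeZero M] (hM : 1 ≤ M) (h ε κ : ℝ)
    (hh : 0 < h) (hε : 0 < ε) (hκ : 0 ≤ κ)
    (δ : ℝ) (hδ : 0 < δ) (hδ' : δ < 4.864)
    (f F V : ℝ → ℝ)
    (N : ℕ) (τ : ℕ → ℝ) (hτ : ∀ k, 1 ≤ k → k ≤ N + 1 → 0 < τ k)
    (hr : ∀ k, 2 ≤ k → k ≤ N + 1 → 0 < ratio τ k ∧ ratio τ k < 4.864 - δ)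
    (φ φhat : ℕ → ZMod M × ZMod M → ℝ) (R : ℕ → ℝ)
    (hsch : BDF2sESAVI M h ε κ f F V N τ φ φhat R) :
    ∀ n, 1 ≤ n → n ≤ N →
      modEnergy M h ε (4.864 - δ) τ φ R n ≤
        modEnergy M h ε (4.864 - δ) τ φ R (n - 1) := by
  obtain ⟨hinit, hpred, hstep, haux⟩ := hsch
  intro n hn1 hnN
  unfold modEnergy
  rw [if_neg (by omega : ¬ n = 0)]
  rw [gradNormSq_eq h hh.ne' (φ n), gradNormSq_eq h hh.ne' (φ (n - 1))]
  have hc : (0:ℝ) < 4.864 - δ := by linarith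
  set s : ℝ := Real.sqrt (4.864 - δ) with hsdef
  have hs : 0 < s := Real.sqrt_pos.2 hc
  have hs2 : s ^ 2 = 4.864 - δ := Real.sq_sqrt hc.le
  have hkey : s ^ 3 ≤ 1 + 2 * s ^ 2 := sqrt_key s hs (by rw [hs2]; linarith)
  have hτn : 0 < τ n := hτ n hn1 (by omega)
  obtain ⟨hr'pos, hr'lt⟩ := hr (n + 1) (by omega) (by omega)
  have hr's : ratio τ (n + 1) ≤ s ^ 2 := by rw [hs2]; linarith
  have haux' := haux n hn1 hnN
  have hstep' := hstep n hn1 hnN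
  set u : ZMod M × ZMod M → ℝ := fun p => φ n p - φ (n - 1) p with hu
  set NL : ZMod M × ZMod M → ℝ := fun p =>
    V (gh M h F (φhat n) (R (n - 1))) * f (φhat n p)
      - κ * (φ n p - V (gh M h F (φhat n) (R (n - 1))) * φhat n p) with hNL
  -- R difference
  have hRdiff : R n - R (n - 1) = -(h ^ 2 * ∑ p : ZMod M × ZMod M, NL p * u p) := by
    have h1 : ipH M h NL (fun p => (φ n p - φ (n - 1) p) / τ n)
        = (h ^ 2 * ∑ p : ZMod M × ZMod M, NL p * u p) / τ n := by
      simp only [ipH, hu]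
      rw [mul_div_assoc, Finset.sum_div]
      exact congrArg _ (Finset.sum_congr rfl fun p _ => (mul_div_assoc _ _ _).symm)
    rw [h1, ← neg_div, div_eq_div_iff hτn.ne' hτn.ne'] at haux'
    exact mul_right_cancel₀ hτn.ne' haux'
  have hNLp : ∀ p, NL p = D2 τ (fun k => φ k p) n - ε ^ 2 * lapH M h (φ n) p := by
    intro p
    have := hstep' p
    simp only [hNL]
    linarith
  have hlap : h ^ 2 * ∑ p : ZMod M × ZMod M, lapH M h (φ n) p * u p = - gIP M (φ n) u := by
    have := sbp h hh.ne' (φ n) u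
    unfold ipH at this
    exact this
  have F1 : R n - R (n - 1)
      = -(h ^ 2 * ∑ p : ZMod M × ZMod M, D2 τ (fun k => φ k p) n * u p)
        - ε ^ 2 * gIP M (φ n) u := by
    have hsum : ∑ p : ZMod M × ZMod M, NL p * u p
        = (∑ p : ZMod M × ZMod M, D2 τ (fun k => φ k p) n * u p)
          - ε ^ 2 * ∑ p : ZMod M × ZMod M, lapH M h (φ n) p * u p := by
      rw [Finset.mul_sum, ← Finset.sum_sub_distrib]
      exact Finset.sum_congr rfl fun p _ => by rw [hNLp p]; ring
    rw [hRdiff, hsum]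
    have := hlap
    nlinarith [hlap]
  have hpolar : ε ^ 2 * gIP M (φ n) u
      = ε ^ 2 / 2 * gIP M (φ n) (φ n) - ε ^ 2 / 2 * gIP M (φ (n - 1)) (φ (n - 1))
        + ε ^ 2 / 2 * gIP M u u := by
    have := gIP_polar (M := M) (φ n) (φ (n - 1))
    rw [← hu] at this
    linear_combination (ε ^ 2 / 2) * this
  have F3 : 0 ≤ ε ^ 2 / 2 * gIP M u u := mul_nonneg (by positivity) (gIP_self_nonneg u)
  have hXnn : 0 ≤ normSq M h u := normSq_nonneg h u
  by_cases hone : n = 1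
  · -- first step
    subst hone
    rw [if_pos (by norm_num : (1:ℕ) - 1 = 0)]
    have hD2sum : h ^ 2 * ∑ p : ZMod M × ZMod M, D2 τ (fun k => φ k p) 1 * u p
        = 1 / τ 1 * normSq M h u := by
      rw [normSq_eq h u]
      have e : ∀ p : ZMod M × ZMod M,
          D2 τ (fun k => φ k p) 1 * u p = 1 / τ 1 * (u p * u p) := by
        intro p
        rw [D2_one]
        simp only [hu]
        norm_num [mul_assoc]
      rw [Finset.sum_congr rfl fun p _ => e p, ← Finset.mul_sum]
      ring
    have hco : ratio τ (1 + 1) * s / (2 * (1 + ratio τ (1 + 1))) ≤ 1 :=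
      coeff_one s _ hs hr'pos hr's hkey
    have hm : ratio τ (1 + 1) * s / (2 * (1 + ratio τ (1 + 1))) * normSq M h u / τ 1
        ≤ normSq M h u / τ 1 := by
      rw [div_le_div_iff₀ hτn hτn]
      have h1 := mul_le_mul_of_nonneg_right hco hXnn
      nlinarith [hτn]
    linarith [F1, hpolar, F3, hD2sum, hm,
      (by ring : normSq M h u / τ 1 = 1 / τ 1 * normSq M h u)]
  · -- n ≥ 2
    have hn2 : 2 ≤ n := by omega
    have hτn1 : 0 < τ (n - 1) := hτ (n - 1) (by omega) (by omega)
    obtain ⟨hrpos, hrlt⟩ := hr n hn2 (by omega)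
    have hrs : ratio τ n ≤ s ^ 2 := by rw [hs2]; linarith
    rw [if_neg (by omega : ¬ n - 1 = 0), (by omega : n - 1 + 1 = n),
      (by omega : n - 1 - 1 = n - 2)]
    set u' : ZMod M × ZMod M → ℝ := fun p => φ (n - 1) p - φ (n - 2) p with hu'
    have hYnn : 0 ≤ normSq M h u' := normSq_nonneg h u'
    have hs0 : s ≠ 0 := hs.ne'
    have hτ0 : τ n ≠ 0 := hτn.ne'
    have hτ10 : τ (n - 1) ≠ 0 := hτn1.ne'
    have h1r : (0:ℝ) < 1 + ratio τ n := by linarith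
    have h1r0 : (1:ℝ) + ratio τ n ≠ 0 := h1r.ne'
    have h1r' : (0:ℝ) < 1 + ratio τ (n + 1) := by linarith
    have hratio : ratio τ n = τ n / τ (n - 1) := by unfold ratio; rw [if_pos hn2]
    have hτrel : τ n = ratio τ n * τ (n - 1) := by rw [hratio, div_mul_cancel₀ _ hτ10]
    have hb0 : bker τ n 0 = (1 + 2 * ratio τ n) / (τ n * (1 + ratio τ n)) := by
      unfold bker
      rw [if_neg (by omega : ¬ n = 1), if_pos rfl]
    have hb1 : bker τ n 1 = -(ratio τ n) ^ 2 / (τ n * (1 + ratio τ n)) := by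
      unfold bker
      rw [if_neg (by omega : ¬ n = 1), if_neg (by omega : ¬ (1:ℕ) = 0), if_pos rfl]
    have hD2sum : h ^ 2 * ∑ p : ZMod M × ZMod M, D2 τ (fun k => φ k p) n * u p
        = (1 + 2 * ratio τ n) / (τ n * (1 + ratio τ n)) * normSq M h u
          + -(ratio τ n) ^ 2 / (τ n * (1 + ratio τ n))
            * (h ^ 2 * ∑ p : ZMod M × ZMod M, u' p * u p) := by
      rw [normSq_eq h u]
      have e : ∀ p : ZMod M × ZMod M, D2 τ (fun k => φ k p) n * u p
          = (1 + 2 * ratio τ n) / (τ n * (1 + ratio τ n)) * (u p * u p)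
            + -(ratio τ n) ^ 2 / (τ n * (1 + ratio τ n)) * (u' p * u p) := by
        intro p
        rw [D2_ge2 τ (fun k => φ k p) n hn2, hb0, hb1]
        simp only [hu, hu']
        ring
      rw [Finset.sum_congr rfl fun p _ => e p, Finset.sum_add_distrib,
        ← Finset.mul_sum, ← Finset.mul_sum]
      ring
    have hCS : 2 * s * (h ^ 2 * ∑ p : ZMod M × ZMod M, u' p * u p)
        ≤ normSq M h u + s ^ 2 * normSq M h u' := by
      rw [normSq_eq h u, normSq_eq h u']
      have hpt : ∀ p : ZMod M × ZMod M,
          2 * s * (u' p * u p) ≤ u p * u p + s ^ 2 * (u' p * u' p) := fun p => by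
        nlinarith [sq_nonneg (u p - s * u' p)]
      calc 2 * s * (h ^ 2 * ∑ p : ZMod M × ZMod M, u' p * u p)
          = h ^ 2 * ((2 * s) * ∑ p : ZMod M × ZMod M, u' p * u p) := by ring
        _ = h ^ 2 * ∑ p : ZMod M × ZMod M, 2 * s * (u' p * u p) := by rw [Finset.mul_sum]
        _ ≤ h ^ 2 * ∑ p : ZMod M × ZMod M, (u p * u p + s ^ 2 * (u' p * u' p)) :=
            mul_le_mul_of_nonneg_left (Finset.sum_le_sum fun p _ => hpt p) (by positivity)
        _ = h ^ 2 * (∑ p : ZMod M × ZMod M, u p * u p)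
            + s ^ 2 * (h ^ 2 * ∑ p : ZMod M × ZMod M, u' p * u' p) := by
            rw [Finset.sum_add_distrib, ← Finset.mul_sum]; ring
    have hZbd : (h ^ 2 * ∑ p : ZMod M × ZMod M, u' p * u p)
        ≤ (normSq M h u + s ^ 2 * normSq M h u') / (2 * s) := by
      rw [le_div_iff₀ (by positivity : (0:ℝ) < 2 * s)]
      linarith
    have hB1 : -(ratio τ n) ^ 2 / (τ n * (1 + ratio τ n)) ≤ 0 := by
      rw [neg_div]
      have := div_nonneg (sq_nonneg (ratio τ n)) (mul_nonneg hτn.le h1r.le)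
      linarith
    have hm2 : -(ratio τ n) ^ 2 / (τ n * (1 + ratio τ n))
          * ((normSq M h u + s ^ 2 * normSq M h u') / (2 * s))
        ≤ -(ratio τ n) ^ 2 / (τ n * (1 + ratio τ n))
          * (h ^ 2 * ∑ p : ZMod M × ZMod M, u' p * u p) :=
      mul_le_mul_of_nonpos_left hZbd hB1
    have hm3 : -(ratio τ n) ^ 2 / (τ n * (1 + ratio τ n))
          * ((normSq M h u + s ^ 2 * normSq M h u') / (2 * s))
        = -(ratio τ n) ^ 2 / (τ n * (1 + ratio τ n)) / (2 * s) * normSq M h u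
          + (-(ratio τ n) ^ 2 / (τ n * (1 + ratio τ n)) * s / 2) * normSq M h u' := by
      field_simp
      ring
    have hp := poly_key s (ratio τ n) (ratio τ (n + 1)) hs hrpos hrs hr'pos hr's hkey
    have c1 : ratio τ (n + 1) * s / (2 * (1 + ratio τ (n + 1))) / τ n
        ≤ (1 + 2 * ratio τ n) / (τ n * (1 + ratio τ n))
          + -(ratio τ n) ^ 2 / (τ n * (1 + ratio τ n)) / (2 * s) := by
      have c1a : ratio τ (n + 1) * s / (2 * (1 + ratio τ (n + 1))) / τ n
          ≤ ((1 + 2 * ratio τ n) / (1 + ratio τ n)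
            - (ratio τ n) ^ 2 / (2 * s * (1 + ratio τ n))) / τ n := by
        rw [div_le_div_iff₀ hτn hτn]
        exact mul_le_mul_of_nonneg_right hp hτn.le
      have c1b : ((1 + 2 * ratio τ n) / (1 + ratio τ n)
            - (ratio τ n) ^ 2 / (2 * s * (1 + ratio τ n))) / τ n
          = (1 + 2 * ratio τ n) / (τ n * (1 + ratio τ n))
            + -(ratio τ n) ^ 2 / (τ n * (1 + ratio τ n)) / (2 * s) := by
        field_simp
        ring
      linarith [c1b ▸ c1a]
    have m1 := mul_le_mul_of_nonneg_right c1 hXnn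
    have m4 : (-(ratio τ n) ^ 2 / (τ n * (1 + ratio τ n)) * s / 2) * normSq M h u'
        = -(ratio τ n * s / (2 * (1 + ratio τ n)) / τ (n - 1) * normSq M h u') := by
      rw [hτrel]
      field_simp
    linarith [F1, hpolar, F3, hD2sum, hm2, hm3, m1, m4,
      (by ring : ratio τ (n + 1) * s / (2 * (1 + ratio τ (n + 1))) * normSq M h u / τ n
        = ratio τ (n + 1) * s / (2 * (1 + ratio τ (n + 1))) / τ n * normSq M h u),
      (by ring : ratio τ n * s / (2 * (1 + ratio τ n)) * normSq M h u' / τ (n - 1)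
        = ratio τ n * s / (2 * (1 + ratio τ n)) / τ (n - 1) * normSq M h u')]
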